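/- Let T be an S_1-admissible tree and N ∈ ℕ. Then there exists an S_N-admissible tree T′ with the same root such that the leaves of T and T′ coincide, and for every leaf E, o_{T′}(E) = N·⌈o_T(E)/N⌉. -/

import Mathlib

/-- The Schreier families: `Schreier 0` consists of the singletons and `∅`;
`Schreier (n+1)` consists of all unions `G_0 ∪ … ∪ G_{k-1}` of nonempty members of
`Schreier n` with `G_0 < G_1 < … < G_{k-1}` and `k ≤ min G_0`. -/
def Schreier : ℕ → Set (Finset ℕ)
  | 0 => {F | F.card ≤ 1}
  | n + 1 => {F | ∃ (k : ℕ) (G : ℕ → Finset ℕ),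
      F = (Finset.range k).biUnion G ∧
      (∀ i < k, G i ∈ Schreier n) ∧
      (∀ i < k, (G i).Nonempty) ∧
      (∀ i j, i < j → j < k → ∀ a ∈ G i, ∀ b ∈ G j, a < b) ∧
      (∀ a ∈ G 0, k ≤ a)}

/-- The minimum of a finite set of naturals (`0` for the empty set). -/
def minN (E : Finset ℕ) : ℕ := E.min.untopD 0

/-- Norming trees: a leaf carries a finite set; an internal node carries a finite
set, the Schreier index `n` used for its immediate successors, and the list of
subtrees rooted at those successors. -/
inductive NTree : Type
  | leaf : Finset ℕ → NTree
  | node : Finset ℕ → ℕ → List NTree → NTree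

/-- The set at the root of a norming tree. -/
def NTree.root : NTree → Finset ℕ
  | .leaf E => E
  | .node E _ _ => E

/-- A finite list of sets is `S_n`-admissible: the sets are successive
(`E < F` for earlier `E`, later `F`) and the set of their minima lies in `S_n`. -/
def AdmissibleSets (n : ℕ) (l : List (Finset ℕ)) : Prop :=
  l.Pairwise (fun E F => ∀ a ∈ E, ∀ b ∈ F, a < b) ∧
    (l.map minN).toFinset ∈ Schreier n

/-- A finite list of sets is `S_n`-allowable: the sets are pairwise disjoint and
the set of their minima lies in `S_n`. -/
def AllowableSets (n : ℕ) (l : List (Finset ℕ)) : Prop :=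
  l.Pairwise (fun E F => Disjoint E F) ∧
    (l.map minN).toFinset ∈ Schreier n

/-- `(S_n)_{n≥1}`-admissible trees: every node set is nonempty, children are
contained in their parent, and the immediate successors of each internal node
form an `S_n`-admissible collection, `n ≥ 1` being the index recorded at the node. -/
inductive ValidAdm : NTree → Prop
  | leaf (E : Finset ℕ) (hE : E.Nonempty) : ValidAdm (.leaf E)
  | node (E : Finset ℕ) (n : ℕ) (cs : List NTree) (hE : E.Nonempty) (hn : 1 ≤ n)
      (hne : cs ≠ [])
      (hsub : ∀ c ∈ cs, NTree.root c ⊆ E)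
      (hadm : AdmissibleSets n (cs.map NTree.root))
      (hval : ∀ c ∈ cs, ValidAdm c) : ValidAdm (.node E n cs)

/-- `(S_n)_{n≥1}`-allowable trees (for the modified mixed Tsirelson norm). -/
inductive ValidAllow : NTree → Prop
  | leaf (E : Finset ℕ) (hE : E.Nonempty) : ValidAllow (.leaf E)
  | node (E : Finset ℕ) (n : ℕ) (cs : List NTree) (hE : E.Nonempty) (hn : 1 ≤ n)
      (hne : cs ≠ [])
      (hsub : ∀ c ∈ cs, NTree.root c ⊆ E)
      (hadm : AllowableSets n (cs.map NTree.root))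
      (hval : ∀ c ∈ cs, ValidAllow c) : ValidAllow (.node E n cs)

/-- `S_N`-admissible trees: every branching uses the fixed Schreier index `N`. -/
inductive ValidAdmN (N : ℕ) : NTree → Prop
  | leaf (E : Finset ℕ) (hE : E.Nonempty) : ValidAdmN N (.leaf E)
  | node (E : Finset ℕ) (cs : List NTree) (hE : E.Nonempty)
      (hne : cs ≠ [])
      (hsub : ∀ c ∈ cs, NTree.root c ⊆ E)
      (hadm : AdmissibleSets N (cs.map NTree.root))
      (hval : ∀ c ∈ cs, ValidAdmN N c) : ValidAdmN N (.node E N cs)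

/-- `IsNodeAt T d F`: `F` is a node of the tree `T` whose order `o(F)`—the sum of
the Schreier indices along the branch from the root to `F`—equals `d`. -/
inductive IsNodeAt : NTree → ℕ → Finset ℕ → Prop
  | root (T : NTree) : IsNodeAt T 0 T.root
  | child (E : Finset ℕ) (n : ℕ) (cs : List NTree) (c : NTree) (d : ℕ) (F : Finset ℕ)
      (hc : c ∈ cs) (h : IsNodeAt c d F) : IsNodeAt (.node E n cs) (n + d) F

/-- `IsLeafAt T d F`: `F` is a leaf of the tree `T` of order `o(F) = d`. -/
inductive IsLeafAt : NTree → ℕ → Finset ℕ → Prop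
  | leaf (E : Finset ℕ) : IsLeafAt (.leaf E) 0 E
  | child (E : Finset ℕ) (n : ℕ) (cs : List NTree) (c : NTree) (d : ℕ) (F : Finset ℕ)
      (hc : c ∈ cs) (h : IsLeafAt c d F) : IsLeafAt (.node E n cs) (n + d) F

lemma minN_mem {E : Finset ℕ} (h : E.Nonempty) : minN E ∈ E := by
  obtain ⟨a, ha⟩ := Finset.min_of_nonempty h
  unfold minN; rw [ha]; exact Finset.mem_of_min ha

lemma minN_le {E : Finset ℕ} {a : ℕ} (ha : a ∈ E) : minN E ≤ a := by
  obtain ⟨b, hb⟩ := Finset.min_of_nonempty ⟨a, ha⟩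
  have h2 := Finset.min_le ha
  rw [hb] at h2
  unfold minN; rw [hb]
  exact_mod_cast h2

lemma minN_mono {E F : Finset ℕ} (hs : F ⊆ E) (h : F.Nonempty) : minN E ≤ minN F :=
  minN_le (hs (minN_mem h))

lemma Schreier.empty_mem (n : ℕ) : (∅ : Finset ℕ) ∈ Schreier n := by
  cases n with
  | zero => simp [Schreier]
  | succ n =>
    refine ⟨0, fun _ => ∅, by simp, ?_, ?_, ?_, ?_⟩ <;> simp

lemma Schreier.singleton_mem {a : ℕ} (ha : 1 ≤ a) (n : ℕ) : ({a} : Finset ℕ) ∈ Schreier n := by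
  induction n with
  | zero => simp [Schreier]
  | succ n ih =>
    refine ⟨1, fun _ => {a}, by simp, fun _ _ => ih, fun _ _ => ⟨a, by simp⟩, ?_, ?_⟩
    · intro i j hij hj; omega
    · intro b hb; simp at hb; omega

lemma Schreier.one_le {n : ℕ} (hn : 1 ≤ n) {F : Finset ℕ} (hF : F ∈ Schreier n)
    {a : ℕ} (ha : a ∈ F) : 1 ≤ a := by
  obtain ⟨m, rfl⟩ : ∃ m, n = m + 1 := ⟨n - 1, by omega⟩
  obtain ⟨k, G, rfl, hG, hne, hsucc, hmin⟩ := hF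
  simp only [Finset.mem_biUnion, Finset.mem_range] at ha
  obtain ⟨i, hi, hai⟩ := ha
  have hk : 1 ≤ k := by omega
  obtain ⟨b, hb⟩ := hne 0 (by omega)
  have hkb := hmin b hb
  rcases Nat.eq_zero_or_pos i with rfl | hi0
  · have := hmin a hai; omega
  · have := hsucc 0 i hi0 hi b hb a hai; omega

/-- Key composition lemma: substituting `Schreier n` blocks into a `Schreier m` set
of minima yields a `Schreier (m+n)` set. -/
lemma Schreier.comp (n : ℕ) (P : ℕ → Finset ℕ) :
    ∀ (m : ℕ) (M : Finset ℕ), M ∈ Schreier m →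
    (∀ a ∈ M, P a ∈ Schreier n) →
    (∀ a ∈ M, (P a).Nonempty) →
    (∀ a ∈ M, ∀ b ∈ P a, a ≤ b) →
    (∀ a ∈ M, ∀ b ∈ M, a < b → ∀ x ∈ P a, ∀ y ∈ P b, x < y) →
    M.biUnion P ∈ Schreier (m + n) := by
  intro m
  induction m with
  | zero =>
    intro M hM hP _ _ _
    simp only [Schreier, Set.mem_setOf_eq] at hM
    rcases Finset.card_le_one_iff_subset_singleton.mp hM with ⟨a, ha⟩
    rcases Finset.subset_singleton_iff.mp ha with rfl | rfl
    · simpa using Schreier.empty_mem n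
    · simpa using hP a (by simp)
  | succ m ih =>
    intro M hM hP hPne hPge hPsep
    obtain ⟨k, G, rfl, hG, hGne, hGsucc, hGmin⟩ := hM
    have hmem : ∀ i < k, ∀ a ∈ G i, a ∈ (Finset.range k).biUnion G := by
      intro i hi a ha
      exact Finset.mem_biUnion.mpr ⟨i, Finset.mem_range.mpr hi, ha⟩
    rw [show m + 1 + n = (m + n) + 1 by omega]
    refine ⟨k, fun i => (G i).biUnion P, ?_, ?_, ?_, ?_, ?_⟩
    · ext x
      simp only [Finset.mem_biUnion, Finset.mem_range]
      constructor
      · rintro ⟨a, ⟨i, hi, hai⟩, hx⟩; exact ⟨i, hi, a, hai, hx⟩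
      · rintro ⟨i, hi, a, hai, hx⟩; exact ⟨a, ⟨i, hi, hai⟩, hx⟩
    · intro i hi
      exact ih (G i) (hG i hi)
        (fun a ha => hP a (hmem i hi a ha))
        (fun a ha => hPne a (hmem i hi a ha))
        (fun a ha => hPge a (hmem i hi a ha))
        (fun a ha b hb hab => hPsep a (hmem i hi a ha) b (hmem i hi b hb) hab)
    · intro i hi
      obtain ⟨a, ha⟩ := hGne i hi
      obtain ⟨x, hx⟩ := hPne a (hmem i hi a ha)
      exact ⟨x, Finset.mem_biUnion.mpr ⟨a, ha, hx⟩⟩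
    · intro i j hij hj x hx y hy
      obtain ⟨a, ha, hxa⟩ := Finset.mem_biUnion.mp hx
      obtain ⟨b, hb, hyb⟩ := Finset.mem_biUnion.mp hy
      exact hPsep a (hmem i (hij.trans hj) a ha) b (hmem j hj b hb)
        (hGsucc i j hij hj a ha b hb) x hxa y hyb
    · intro x hx
      obtain ⟨a, ha, hxa⟩ := Finset.mem_biUnion.mp hx
      rcases Nat.eq_zero_or_pos k with rfl | hk
      · omega
      · exact le_trans (hGmin a ha) (hPge a (hmem 0 hk a ha) x hxa)

/-! ### tree expansion -/

def exp1 : NTree → List NTree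
  | .leaf E => [.leaf E]
  | .node _ _ cs => cs

def frontL : ℕ → List NTree → List NTree
  | 0, l => l
  | j+1, l => (frontL j l).flatMap exp1

lemma valid_root_nonempty {t : NTree} (h : ValidAdmN 1 t) : t.root.Nonempty := by
  cases h <;> assumption

lemma exp1_valid {t : NTree} (ht : ValidAdmN 1 t) : ∀ u ∈ exp1 t, ValidAdmN 1 u := by
  cases ht with
  | leaf E hE => intro u hu; simp [exp1] at hu; subst hu; exact .leaf E hE
  | node E cs hE hne hsub hadm hval => exact hval

lemma exp1_sub {t : NTree} (ht : ValidAdmN 1 t) : ∀ u ∈ exp1 t, u.root ⊆ t.root := by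
  cases ht with
  | leaf E hE => intro u hu; simp [exp1] at hu; subst hu; exact subset_rfl
  | node E cs hE hne hsub hadm hval => exact hsub

lemma exp1_ne {t : NTree} (ht : ValidAdmN 1 t) : exp1 t ≠ [] := by
  cases ht with
  | leaf E hE => simp [exp1]
  | node E cs hE hne hsub hadm hval => exact hne

lemma exp1_sizeOf {t u : NTree} (hu : u ∈ exp1 t) : sizeOf u ≤ sizeOf t := by
  cases t with
  | leaf E => simp [exp1] at hu; subst hu; rfl
  | node E n cs =>
    simp only [exp1] at hu
    have := List.sizeOf_lt_of_mem hu
    simp only [NTree.node.sizeOf_spec]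
    omega

lemma frontL_sizeOf : ∀ (j : ℕ) (l : List NTree) (u : NTree), u ∈ frontL j l →
    ∃ t ∈ l, sizeOf u ≤ sizeOf t := by
  intro j
  induction j with
  | zero => intro l u hu; exact ⟨u, hu, le_rfl⟩
  | succ j ih =>
    intro l u hu
    simp only [frontL, List.mem_flatMap] at hu
    obtain ⟨s, hs, hus⟩ := hu
    obtain ⟨t, ht, hst⟩ := ih l s hs
    exact ⟨t, ht, (exp1_sizeOf hus).trans hst⟩

/-! ### list helpers -/

lemma existsP (l : List NTree) (g : NTree → ℕ) (e : NTree → Finset ℕ)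
    (hg : l.Pairwise (fun t s => g t ≠ g s)) :
    ∃ P : ℕ → Finset ℕ, ∀ t ∈ l, P (g t) = e t := by
  induction l with
  | nil => exact ⟨fun _ => ∅, by simp⟩
  | cons a l ih =>
    obtain ⟨hga, hg'⟩ := List.pairwise_cons.mp hg
    obtain ⟨P, hP⟩ := ih hg'
    refine ⟨fun x => if x = g a then e a else P x, ?_⟩
    intro t ht
    rcases List.mem_cons.mp ht with rfl | ht
    · simp
    · have : g t ≠ g a := fun h => (hga t ht) h.symm
      simp only [if_neg this]
      exact hP t ht

lemma toFinset_flatMap_eq (l : List NTree) (f : NTree → List ℕ) (g : NTree → ℕ)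
    (P : ℕ → Finset ℕ) (h : ∀ t ∈ l, (f t).toFinset = P (g t)) :
    (l.flatMap f).toFinset = ((l.map g).toFinset).biUnion P := by
  induction l with
  | nil => simp
  | cons a l ih =>
    simp only [List.flatMap_cons, List.toFinset_append, List.map_cons, List.toFinset_cons,
      Finset.biUnion_insert]
    rw [h a (by simp), ih (fun t ht => h t (List.mem_cons_of_mem a ht))]

lemma pairwise_succ_min (l : List NTree) (hne : ∀ t ∈ l, t.root.Nonempty)
    (hp : l.Pairwise (fun t s => ∀ x ∈ t.root, ∀ y ∈ s.root, x < y)) :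
    ∀ t ∈ l, ∀ s ∈ l, minN t.root < minN s.root →
      ∀ x ∈ t.root, ∀ y ∈ s.root, x < y := by
  induction l with
  | nil => simp
  | cons a l ih =>
    obtain ⟨ha, hp'⟩ := List.pairwise_cons.mp hp
    intro t ht s hs hts x hx y hy
    rcases List.mem_cons.mp ht with h1 | h1
    · rcases List.mem_cons.mp hs with h2 | h2
      · subst h1; subst h2; omega
      · subst h1; exact ha s h2 x hx y hy
    · rcases List.mem_cons.mp hs with h2 | h2
      · exfalso
        subst h2
        have h3 := ha t h1 (minN s.root) (minN_mem (hne s (by simp))) (minN t.root)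
          (minN_mem (hne t (by simp [h1])))
        omega
      · exact ih (fun u hu => hne u (by simp [hu])) hp' t h1 s h2 hts x hx y hy

lemma pairwise_min_lt (l : List NTree) (hne : ∀ t ∈ l, t.root.Nonempty)
    (hp : l.Pairwise (fun t s => ∀ x ∈ t.root, ∀ y ∈ s.root, x < y)) :
    l.Pairwise (fun t s => minN t.root < minN s.root) := by
  induction l with
  | nil => simp
  | cons a l ih =>
    obtain ⟨ha, hp'⟩ := List.pairwise_cons.mp hp
    refine List.pairwise_cons.mpr ⟨?_, ih (fun u hu => hne u (by simp [hu])) hp'⟩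
    intro s hs
    exact ha s hs _ (minN_mem (hne a (by simp))) _ (minN_mem (hne s (by simp [hs])))

/-! ### flatMap pairwise helpers -/

lemma pairwise_flatMap' {α β : Type*} {R : β → β → Prop} {f : α → List β} {l : List α}
    (hin : ∀ a ∈ l, (f a).Pairwise R)
    (hacross : l.Pairwise (fun a b => ∀ x ∈ f a, ∀ y ∈ f b, R x y)) :
    (l.flatMap f).Pairwise R := by
  induction l with
  | nil => simp
  | cons a l ih =>
    obtain ⟨ha, h'⟩ := List.pairwise_cons.mp hacross
    simp only [List.flatMap_cons]
    rw [List.pairwise_append]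
    refine ⟨hin a (by simp), ih (fun b hb => hin b (by simp [hb])) h', ?_⟩
    intro x hx y hy
    obtain ⟨b, hb, hyb⟩ := List.mem_flatMap.mp hy
    exact ha b hb x hx y hyb

lemma pairwise_imp_mem {α : Type*} {R S : α → α → Prop} {l : List α}
    (h : ∀ a ∈ l, ∀ b ∈ l, R a b → S a b) (hp : l.Pairwise R) : l.Pairwise S := by
  induction l with
  | nil => simp
  | cons a l ih =>
    obtain ⟨ha, hp'⟩ := List.pairwise_cons.mp hp
    exact List.pairwise_cons.mpr ⟨fun b hb => h a (by simp) b (by simp [hb]) (ha b hb),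
      ih (fun x hx y hy => h x (by simp [hx]) y (by simp [hy])) hp'⟩

lemma map_flatMap' {α β γ : Type*} (l : List α) (f : α → List β) (g : β → γ) :
    (l.flatMap f).map g = l.flatMap (fun a => (f a).map g) := by
  induction l with
  | nil => simp
  | cons a l ih => simp [List.flatMap_cons, ih]

/-! ### the one-step front expansion lemma -/

lemma step (j : ℕ) (hj : 1 ≤ j) (l : List NTree)
    (hval : ∀ t ∈ l, ValidAdmN 1 t)
    (hadm : AdmissibleSets j (l.map NTree.root)) :
    (∀ u ∈ l.flatMap exp1, ValidAdmN 1 u) ∧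
    (∀ u ∈ l.flatMap exp1, ∃ t ∈ l, u.root ⊆ t.root) ∧
    AdmissibleSets (j+1) ((l.flatMap exp1).map NTree.root) := by
  obtain ⟨hpair, hmins⟩ := hadm
  have hp : l.Pairwise (fun t s => ∀ x ∈ t.root, ∀ y ∈ s.root, x < y) :=
    List.pairwise_map.mp hpair
  have hne_roots : ∀ t ∈ l, t.root.Nonempty := fun t ht => valid_root_nonempty (hval t ht)
  set g : NTree → ℕ := fun t => minN t.root with hg_def
  have hM : (l.map g).toFinset ∈ Schreier j := by
    rw [List.map_map] at hmins; exact hmins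
  have part1 : ∀ u ∈ l.flatMap exp1, ValidAdmN 1 u := by
    intro u hu
    obtain ⟨t, ht, hut⟩ := List.mem_flatMap.mp hu
    exact exp1_valid (hval t ht) u hut
  have part2 : ∀ u ∈ l.flatMap exp1, ∃ t ∈ l, u.root ⊆ t.root := by
    intro u hu
    obtain ⟨t, ht, hut⟩ := List.mem_flatMap.mp hu
    exact ⟨t, ht, exp1_sub (hval t ht) u hut⟩
  refine ⟨part1, part2, ?_, ?_⟩
  · -- pairwise successiveness
    rw [List.pairwise_map]
    apply pairwise_flatMap'
    · intro t ht
      cases hval t ht with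
      | leaf E hE => simp [exp1]
      | node E cs hE hne hsub hadm' hval' =>
        show cs.Pairwise _
        exact List.pairwise_map.mp hadm'.1
    · refine pairwise_imp_mem ?_ hp
      intro t ht s hs hts u hu v hv x hx y hy
      exact hts x (exp1_sub (hval t ht) u hu hx) y (exp1_sub (hval s hs) v hv hy)
  · -- minima Schreier condition
    have hgdist : l.Pairwise (fun t s => g t ≠ g s) :=
      (pairwise_min_lt l hne_roots hp).imp (fun h => Nat.ne_of_lt h)
    obtain ⟨P, hP⟩ := existsP l g (fun t => ((exp1 t).map (fun u => minN u.root)).toFinset) hgdist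
    have hkey : ((l.flatMap exp1).map NTree.root).map minN
        = l.flatMap (fun t => (exp1 t).map (fun u => minN u.root)) := by
      rw [List.map_map, map_flatMap']
      rfl
    rw [hkey, toFinset_flatMap_eq l _ g P (fun t ht => (hP t ht).symm)]
    have hMex : ∀ a ∈ (l.map g).toFinset, ∃ t ∈ l, g t = a := by
      intro a ha
      rw [List.mem_toFinset, List.mem_map] at ha
      exact ha
    have hrootmem : ∀ t ∈ l, ∀ x ∈ P (g t), x ∈ t.root := by
      intro t ht x hx
      rw [hP t ht, List.mem_toFinset, List.mem_map] at hx
      obtain ⟨u, hu, rfl⟩ := hx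
      exact exp1_sub (hval t ht) u hu
        (minN_mem (valid_root_nonempty (exp1_valid (hval t ht) u hu)))
    exact Schreier.comp 1 P j _ hM
      (by -- Schreier 1
        intro a ha
        obtain ⟨t, ht, rfl⟩ := hMex a ha
        rw [hP t ht]
        cases hval t ht with
        | leaf E hE =>
          have h1 : (1:ℕ) ≤ g (.leaf E) := Schreier.one_le hj hM (by
            rw [List.mem_toFinset, List.mem_map]; exact ⟨.leaf E, ht, rfl⟩)
          simpa [exp1, NTree.root, hg_def] using Schreier.singleton_mem h1 1
        | node E cs hE hne hsub hadm' hval' =>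
          have h2 := hadm'.2
          rw [List.map_map] at h2
          simpa [exp1, Function.comp_def] using h2)
      (by -- nonempty
        intro a ha
        obtain ⟨t, ht, rfl⟩ := hMex a ha
        rw [hP t ht]
        obtain ⟨u, hu⟩ := List.exists_mem_of_ne_nil _ (exp1_ne (hval t ht))
        exact ⟨minN u.root, by rw [List.mem_toFinset, List.mem_map]; exact ⟨u, hu, rfl⟩⟩)
      (by -- a ≤ b
        intro a ha b hb
        obtain ⟨t, ht, rfl⟩ := hMex a ha
        rw [hP t ht, List.mem_toFinset, List.mem_map] at hb
        obtain ⟨u, hu, rfl⟩ := hb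
        exact minN_mono (exp1_sub (hval t ht) u hu)
          (valid_root_nonempty (exp1_valid (hval t ht) u hu)))
      (by -- separation
        intro a ha b hb hab x hx y hy
        obtain ⟨t, ht, rfl⟩ := hMex a ha
        obtain ⟨s, hs, rfl⟩ := hMex b hb
        exact pairwise_succ_min l hne_roots hp t ht s hs hab x (hrootmem t ht x hx)
          y (hrootmem s hs y hy))

/-! ### the iterated front lemma -/

lemma frontL_inv (j : ℕ) (l : List NTree)
    (hval : ∀ t ∈ l, ValidAdmN 1 t) (hadm : AdmissibleSets 1 (l.map NTree.root)) :
    (∀ u ∈ frontL j l, ValidAdmN 1 u) ∧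
    (∀ u ∈ frontL j l, ∃ t ∈ l, u.root ⊆ t.root) ∧
    AdmissibleSets (1 + j) ((frontL j l).map NTree.root) := by
  induction j with
  | zero => exact ⟨hval, fun u hu => ⟨u, hu, subset_rfl⟩, hadm⟩
  | succ j ih =>
    obtain ⟨h1, h2, h3⟩ := ih
    have hstep := step (1+j) (by omega) (frontL j l) h1 h3
    refine ⟨hstep.1, ?_, ?_⟩
    · intro u hu
      obtain ⟨s, hs, hsu⟩ := hstep.2.1 u hu
      obtain ⟨t, ht, hst⟩ := h2 s hs
      exact ⟨t, ht, hsu.trans hst⟩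
    · have h4 := hstep.2.2
      rw [show 1+j+1 = 1+(j+1) by omega] at h4
      exact h4

lemma frontL_ne (j : ℕ) (l : List NTree)
    (hval : ∀ t ∈ l, ValidAdmN 1 t) (hadm : AdmissibleSets 1 (l.map NTree.root))
    (hne : l ≠ []) : frontL j l ≠ [] := by
  induction j with
  | zero => exact hne
  | succ j ih =>
    obtain ⟨u, hu⟩ := List.exists_mem_of_ne_nil _ ih
    have huval := (frontL_inv j l hval hadm).1 u hu
    obtain ⟨v, hv⟩ := List.exists_mem_of_ne_nil _ (exp1_ne huval)
    exact List.ne_nil_of_mem (List.mem_flatMap.mpr ⟨u, hu, hv⟩)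

/-! ### leaf tracking -/

lemma exp1_leaf_fwd {t : NTree} (ht : ValidAdmN 1 t) {d : ℕ} {E : Finset ℕ}
    (h : IsLeafAt t d E) : ∃ u ∈ exp1 t, IsLeafAt u (d-1) E := by
  cases t with
  | leaf E' =>
    cases h
    exact ⟨.leaf E, by simp [exp1], by simpa using IsLeafAt.leaf E⟩
  | node E' n cs =>
    cases ht
    cases h with
    | child _ _ _ c d' F hc h' =>
      exact ⟨c, hc, by simpa using h'⟩

lemma frontL_leaf_fwd (j : ℕ) (l : List NTree)
    (hval : ∀ t ∈ l, ValidAdmN 1 t) (hadm : AdmissibleSets 1 (l.map NTree.root))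
    {t : NTree} {d : ℕ} {E : Finset ℕ} (ht : t ∈ l) (h : IsLeafAt t d E) :
    ∃ u ∈ frontL j l, IsLeafAt u (d - j) E := by
  induction j with
  | zero => exact ⟨t, ht, by simpa using h⟩
  | succ j ih =>
    obtain ⟨u, hu, h'⟩ := ih
    have huval := (frontL_inv j l hval hadm).1 u hu
    obtain ⟨v, hv, h''⟩ := exp1_leaf_fwd huval h'
    refine ⟨v, List.mem_flatMap.mpr ⟨u, hu, hv⟩, ?_⟩
    rwa [show d - j - 1 = d - (j+1) by omega] at h''

lemma exp1_leaf_bwd {t u : NTree} (hu : u ∈ exp1 t) {d : ℕ} {E : Finset ℕ}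
    (h : IsLeafAt u d E) : ∃ d', IsLeafAt t d' E := by
  cases t with
  | leaf E' =>
    simp [exp1] at hu
    subst hu
    cases h
    exact ⟨0, IsLeafAt.leaf E⟩
  | node E' n cs => exact ⟨n + d, IsLeafAt.child E' n cs u d E hu h⟩

lemma frontL_leaf_bwd (j : ℕ) (l : List NTree) {u : NTree} {d : ℕ} {E : Finset ℕ}
    (hu : u ∈ frontL j l) (h : IsLeafAt u d E) : ∃ t ∈ l, ∃ d', IsLeafAt t d' E := by
  induction j generalizing u d with
  | zero => exact ⟨u, hu, d, h⟩
  | succ j ih =>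
    obtain ⟨s, hs, hus⟩ := List.mem_flatMap.mp hu
    obtain ⟨d', h'⟩ := exp1_leaf_bwd hus h
    exact ih hs h'

/-! ### main construction -/

lemma main_lemma (N : ℕ) (hN : 1 ≤ N) :
    ∀ (n : ℕ) (t : NTree), sizeOf t ≤ n → ValidAdmN 1 t →
    ∃ t', ValidAdmN N t' ∧ t'.root = t.root ∧
      (∀ E d, IsLeafAt t d E → IsLeafAt t' (N * ((d + N - 1) / N)) E) ∧
      (∀ E d', IsLeafAt t' d' E → ∃ d, IsLeafAt t d E) := by
  intro n
  induction n with
  | zero =>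
    intro t hsz _
    exfalso
    cases t <;> simp at hsz
  | succ n ih =>
    intro t hsz ht
    cases t with
    | leaf E =>
      refine ⟨.leaf E, ?_, rfl, ?_, ?_⟩
      · cases ht; exact .leaf E ‹E.Nonempty›
      · intro E' d h
        cases h
        have h0 : (0 + N - 1) / N = 0 := Nat.div_eq_of_lt (by omega)
        rw [h0, Nat.mul_zero]
        exact IsLeafAt.leaf E
      · intro E' d' h
        exact ⟨d', h⟩
    | node E m cs =>
      cases ht with
      | node _ _ hE hne hsub hadm hval =>
      -- here m = 1
      set F := frontL (N-1) cs with hF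
      obtain ⟨Fval, Fsub, Fadm⟩ := frontL_inv (N-1) cs hval hadm
      have FadmN : AdmissibleSets N (F.map NTree.root) := by
        rwa [show 1 + (N-1) = N by omega] at Fadm
      have Fne : F ≠ [] := frontL_ne (N-1) cs hval hadm hne
      have Fsz : ∀ u ∈ F, sizeOf u ≤ n := by
        intro u hu
        obtain ⟨c, hc, hle⟩ := frontL_sizeOf (N-1) cs u hu
        have h2 := List.sizeOf_lt_of_mem hc
        simp only [NTree.node.sizeOf_spec] at hsz
        omega
      have hch : ∀ u : {u // u ∈ F}, ∃ u', ValidAdmN N u' ∧ u'.root = u.1.root ∧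
          (∀ E d, IsLeafAt u.1 d E → IsLeafAt u' (N * ((d + N - 1) / N)) E) ∧
          (∀ E d', IsLeafAt u' d' E → ∃ d, IsLeafAt u.1 d E) :=
        fun u => ih u.1 (Fsz u.1 u.2) (Fval u.1 u.2)
      choose f hf1 hf2 hf3 hf4 using hch
      set cs' := F.attach.map f with hcs'
      have hroots : cs'.map NTree.root = F.map NTree.root := by
        rw [hcs', List.map_map]
        have : (NTree.root ∘ f) = (fun u : {u // u ∈ F} => u.1.root) := funext fun u => hf2 u
        rw [this]
        rw [show (fun u : {u // u ∈ F} => u.1.root) = NTree.root ∘ Subtype.val from rfl,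
          ← List.map_map, List.attach_map_subtype_val]
      have hmem' : ∀ v ∈ cs', ∃ u : {u // u ∈ F}, f u = v := by
        intro v hv
        rw [hcs', List.mem_map] at hv
        obtain ⟨u, _, huv⟩ := hv
        exact ⟨u, huv⟩
      refine ⟨.node E N cs', ?_, rfl, ?_, ?_⟩
      · refine ValidAdmN.node E cs' hE ?_ ?_ ?_ ?_
        · rw [hcs']
          simp only [ne_eq, List.map_eq_nil_iff, List.attach_eq_nil_iff]
          exact Fne
        · intro v hv
          obtain ⟨u, rfl⟩ := hmem' v hv
          rw [hf2 u]
          obtain ⟨c, hc, hsub'⟩ := Fsub u.1 u.2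
          exact hsub'.trans (hsub c hc)
        · rwa [hroots]
        · intro v hv
          obtain ⟨u, rfl⟩ := hmem' v hv
          exact hf1 u
      · -- forward leaf order
        intro E' d h
        cases h with
        | child _ _ _ c d₁ F' hc h' =>
          -- d = 1 + d₁ (m = 1)
          obtain ⟨u, hu, h₂⟩ := frontL_leaf_fwd (N-1) cs hval hadm hc h'
          by_cases hcase : d₁ ≤ N - 1
          · -- leaf of order ≤ N ; u must be the leaf itself
            rw [show d₁ - (N-1) = 0 by omega] at h₂
            have h3 := hf3 ⟨u, hu⟩ E' 0 h₂
            have h4 : (0 + N - 1) / N = 0 := Nat.div_eq_of_lt (by omega)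
            rw [h4, Nat.mul_zero] at h3
            have h5 : IsLeafAt (.node E N cs') (N + 0) E' :=
              IsLeafAt.child E N cs' (f ⟨u, hu⟩) 0 E'
                (by rw [hcs']; exact List.mem_map.mpr ⟨⟨u, hu⟩, by simp [hu], rfl⟩) h3
            have h6 : (1 + d₁ + N - 1) / N = 1 := by
              apply Nat.div_eq_of_lt_le <;> omega
            rw [h6, Nat.mul_one]
            simpa using h5
          · -- deep leaf
            have h3 := hf3 ⟨u, hu⟩ E' (d₁ - (N-1)) h₂
            have h5 : IsLeafAt (.node E N cs') (N + N * ((d₁ - (N-1) + N - 1) / N)) E' :=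
              IsLeafAt.child E N cs' (f ⟨u, hu⟩) _ E'
                (by rw [hcs']; exact List.mem_map.mpr ⟨⟨u, hu⟩, by simp [hu], rfl⟩) h3
            have harith : N + N * ((d₁ - (N-1) + N - 1) / N) = N * ((1 + d₁ + N - 1) / N) := by
              have e1 : d₁ - (N-1) + N - 1 = d₁ := by omega
              have e2 : 1 + d₁ + N - 1 = d₁ + N := by omega
              rw [e1, e2, Nat.add_div_right d₁ (by omega)]
              ring
            rwa [harith] at h5
      · -- backward
        intro E' d' h
        cases h with
        | child _ _ _ v d₂ F' hv h' =>
          obtain ⟨u, rfl⟩ := hmem' v hv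
          obtain ⟨d₃, h₃⟩ := hf4 u E' d₂ h'
          obtain ⟨c, hc, d₄, h₄⟩ := frontL_leaf_bwd (N-1) cs u.2 h₃
          exact ⟨1 + d₄, IsLeafAt.child E 1 cs c d₄ E' hc h₄⟩


/-- Let `T` be an `S_1`-admissible tree and `N ∈ ℕ`.  Then there
is an `S_N`-admissible tree `T'` with the same root, the same set of leaves, and
with `o_{T'}(E) = N⌈o_T(E)/N⌉` for every leaf `E`. -/
theorem stmt15 (T : NTree) (hT : ValidAdmN 1 T) (N : ℕ) (hN : 1 ≤ N) :
    ∃ T' : NTree, ValidAdmN N T' ∧ T'.root = T.root ∧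
      (∀ E : Finset ℕ, (∃ d, IsLeafAt T d E) ↔ (∃ d, IsLeafAt T' d E)) ∧
      (∀ E d, IsLeafAt T d E → IsLeafAt T' (N * ((d + N - 1) / N)) E) := by
  obtain ⟨T', h1, h2, h3, h4⟩ := main_lemma N hN (sizeOf T) T le_rfl hT
  refine ⟨T', h1, h2, ?_, h3⟩
  intro E
  constructor
  · rintro ⟨d, hd⟩; exact ⟨_, h3 E d hd⟩
  · rintro ⟨d', hd'⟩; exact h4 E d' hd'
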